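/- Every polynomial (B^{n1} B) ∘ … ∘ (B^{nk} B) is βη-equivalent to a decreasing polynomial (one whose sequence of degrees is weakly decreasing) of the same length k and with the same minimum degree. -/

import Mathlib

/-- Untyped lambda terms in de Bruijn representation. -/
inductive Lam where
  | var : Nat → Lam
  | app : Lam → Lam → Lam
  | lam : Lam → Lam
deriving DecidableEq

namespace Lam

/-- Lift (shift by one) all free variables with index ≥ `c`. -/
def lift (c : Nat) : Lam → Lam
  | var n => if n < c then var n else var (n + 1)
  | app a b => app (lift c a) (lift c b)
  | lam a => lam (lift (c + 1) a)

/-- Substitute `s` for the free variable with index `d`. -/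
def subst (d : Nat) (s : Lam) : Lam → Lam
  | var n => if n = d then s else if d < n then var (n - 1) else var n
  | app a b => app (subst d s a) (subst d s b)
  | lam a => lam (subst (d + 1) (lift 0 s) a)

/-- One-step βη-reduction (compatible closure of β and η). -/
inductive Step : Lam → Lam → Prop
  | beta (a b : Lam) : Step (app (lam a) b) (subst 0 b a)
  | eta (a : Lam) : Step (lam (app (lift 0 a) (var 0))) a
  | appL {a a' : Lam} (b : Lam) : Step a a' → Step (app a b) (app a' b)
  | appR (a : Lam) {b b' : Lam} : Step b b' → Step (app a b) (app a b')
  | xi {a a' : Lam} : Step a a' → Step (lam a) (lam a')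

/-- βη-equivalence: the equivalence relation generated by one-step βη-reduction. -/
def BetaEtaEq (a b : Lam) : Prop := Relation.EqvGen Step a b

/-- The B combinator λf.λg.λx. f (g x). -/
def B : Lam := lam (lam (lam (app (var 2) (app (var 1) (var 0)))))

/-- `flat X n` is the (n+1)-fold flat left application, i.e. `X_(n+1)`:
`flat X 0 = X = X_(1)` and `flat X (n+1) = (flat X n) X = X_(n+2)`. -/
def flat (X : Lam) : Nat → Lam
  | 0 => X
  | n + 1 => app (flat X n) X

end Lam

open Lam

/-- `bpow k e` is the k-fold application B (B (… (B e)…)). -/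
def bpow : ℕ → Lam → Lam
  | 0, e => e
  | k + 1, e => app B (bpow k e)

/-- Composition e1 ∘ e2 = B e1 e2. -/
def comp (a b : Lam) : Lam := app (app B a) b

/-- The polynomial (B^{n1} B) ∘ (B^{n2} B) ∘ … ∘ (B^{nk} B) of a nonempty list
of degrees [n1, …, nk]. -/
def poly : List ℕ → Lam
  | [] => B
  | [n] => bpow n B
  | n :: ns => comp (bpow n B) (poly ns)

section Lemmas
open Lam

lemma lift_lift (t : Lam) : ∀ i j, i ≤ j → lift i (lift j t) = lift (j+1) (lift i t) := by
  induction t with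
  | var n =>
      intro i j h; simp only [lift]
      split_ifs <;> simp only [lift] <;> split_ifs <;> (congr 1 <;> omega)
  | app a b iha ihb => intro i j h; simp [lift, iha _ _ h, ihb _ _ h]
  | lam a iha => intro i j h; simp [lift, iha (i+1) (j+1) (by omega)]

lemma subst_lift (t : Lam) : ∀ d s, subst d s (lift d t) = t := by
  induction t with
  | var n =>
      intro d s; simp only [lift]
      split_ifs <;> simp only [subst] <;> split_ifs <;> (first | (congr 1 <;> omega) | omega)
  | app a b iha ihb => intro d s; simp [lift, subst, iha, ihb]
  | lam a iha => intro d s; simp [lift, subst, iha]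

end Lemmas
section Lemmas2
open Lam

lemma beq_refl (a : Lam) : BetaEtaEq a a := Relation.EqvGen.refl a
lemma beq_symm {a b : Lam} (h : BetaEtaEq a b) : BetaEtaEq b a := Relation.EqvGen.symm _ _ h
lemma beq_trans {a b c : Lam} (h : BetaEtaEq a b) (h' : BetaEtaEq b c) : BetaEtaEq a c :=
  Relation.EqvGen.trans _ _ _ h h'
lemma beq_step {a b : Lam} (h : Step a b) : BetaEtaEq a b := Relation.EqvGen.rel _ _ h

lemma beq_appL {a a' : Lam} (b : Lam) (h : BetaEtaEq a a') : BetaEtaEq (app a b) (app a' b) := by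
  induction h with
  | rel x y h => exact beq_step (Step.appL b h)
  | refl x => exact beq_refl _
  | symm x y _ ih => exact beq_symm ih
  | trans x y z _ _ ih1 ih2 => exact beq_trans ih1 ih2

lemma beq_appR (a : Lam) {b b' : Lam} (h : BetaEtaEq b b') : BetaEtaEq (app a b) (app a b') := by
  induction h with
  | rel x y h => exact beq_step (Step.appR a h)
  | refl x => exact beq_refl _
  | symm x y _ ih => exact beq_symm ih
  | trans x y z _ _ ih1 ih2 => exact beq_trans ih1 ih2

lemma beq_lam {a a' : Lam} (h : BetaEtaEq a a') : BetaEtaEq (lam a) (lam a') := by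
  induction h with
  | rel x y h => exact beq_step (Step.xi h)
  | refl x => exact beq_refl _
  | symm x y _ ih => exact beq_symm ih
  | trans x y z _ _ ih1 ih2 => exact beq_trans ih1 ih2

lemma beq_app {a a' b b' : Lam} (h : BetaEtaEq a a') (h' : BetaEtaEq b b') :
    BetaEtaEq (app a b) (app a' b') := beq_trans (beq_appL _ h) (beq_appR _ h')

lemma lift_B (c : ℕ) : lift c B = B := by simp [B, lift]

/-- B Z reduces to λgλx. Z↑↑ (g x). -/
lemma appB_red (Z : Lam) :
    BetaEtaEq (app B Z) (lam (lam (app (lift 0 (lift 0 Z)) (app (var 1) (var 0))))) := by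
  have h := Step.beta (lam (lam (app (var 2) (app (var 1) (var 0))))) Z
  have e : subst 0 Z (lam (lam (app (var 2) (app (var 1) (var 0))))) =
      lam (lam (app (lift 0 (lift 0 Z)) (app (var 1) (var 0)))) := by
    simp [subst]
  exact e ▸ beq_step h

/-- comp X Y reduces to λx. X↑ (Y↑ x). -/
lemma comp_red (X Y : Lam) :
    BetaEtaEq (comp X Y) (lam (app (lift 0 X) (app (lift 0 Y) (var 0)))) := by
  have h1 : BetaEtaEq (comp X Y)
      (app (lam (lam (app (lift 0 (lift 0 X)) (app (var 1) (var 0))))) Y) :=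
    beq_appL Y (appB_red X)
  refine beq_trans h1 ?_
  have h2 := Step.beta (lam (app (lift 0 (lift 0 X)) (app (var 1) (var 0)))) Y
  have e : subst 0 Y (lam (app (lift 0 (lift 0 X)) (app (var 1) (var 0)))) =
      lam (app (lift 0 X) (app (lift 0 Y) (var 0))) := by
    simp [subst, lift_lift X 0 0 (le_refl 0), subst_lift]
  exact e ▸ beq_step h2

lemma comp_apply (X Y a : Lam) :
    BetaEtaEq (app (comp X Y) a) (app X (app Y a)) := by
  refine beq_trans (beq_appL a (comp_red X Y)) ?_
  have h2 := Step.beta (app (lift 0 X) (app (lift 0 Y) (var 0))) a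
  have e : subst 0 a (app (lift 0 X) (app (lift 0 Y) (var 0))) = app X (app Y a) := by
    simp [subst, subst_lift]
  exact e ▸ beq_step h2

end Lemmas2
section Lemmas3
open Lam

lemma lift_lift0 (t : Lam) (c : ℕ) : lift (c+1) (lift 0 t) = lift 0 (lift c t) :=
  (lift_lift t 0 c (Nat.zero_le c)).symm

lemma lift_app (c : ℕ) (a b : Lam) : lift c (app a b) = app (lift c a) (lift c b) := rfl

/-- B (X ∘ Y) = B X ∘ B Y. -/
lemma beq_B_comp (X Y : Lam) :
    BetaEtaEq (app B (comp X Y)) (comp (app B X) (app B Y)) := by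
  set X1 := lift 0 X with hX1
  set Y1 := lift 0 Y with hY1
  set X2 := lift 0 X1 with hX2
  set Y2 := lift 0 Y1 with hY2
  set N := lam (lam (app X2 (app Y2 (app (var 1) (var 0))))) with hN
  have hL : BetaEtaEq (app B (comp X Y)) N := by
    have h1 : BetaEtaEq (app B (comp X Y))
        (app B (lam (app X1 (app Y1 (var 0))))) := beq_appR B (comp_red X Y)
    refine beq_trans h1 ?_
    have h2 := appB_red (lam (app X1 (app Y1 (var 0))))
    have e : lift 0 (lift 0 (lam (app X1 (app Y1 (var 0))))) =
        lam (app (lift 0 X2) (app (lift 0 Y2) (var 0))) := by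
      simp [lift, hX1, hY1, hX2, hY2, lift_lift0]
    rw [e] at h2
    refine beq_trans h2 ?_
    refine beq_lam (beq_lam ?_)
    have h3 := Step.beta (app (lift 0 X2) (app (lift 0 Y2) (var 0))) (app (var 1) (var 0))
    have e2 : subst 0 (app (var 1) (var 0)) (app (lift 0 X2) (app (lift 0 Y2) (var 0))) =
        app X2 (app Y2 (app (var 1) (var 0))) := by
      simp [subst, subst_lift]
    rw [e2] at h3
    exact beq_step h3
  have hR : BetaEtaEq (comp (app B X) (app B Y)) N := by
    have h1 : BetaEtaEq (comp (app B X) (app B Y))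
        (lam (app (app B X1) (app (app B Y1) (var 0)))) := by
      have := comp_red (app B X) (app B Y)
      simpa [lift, lift_B, hX1, hY1] using this
    refine beq_trans h1 ?_
    set W := lam (app Y2 (app (var 1) (var 0))) with hW
    have h2 : BetaEtaEq (app (app B Y1) (var 0)) W := by
      have := comp_red Y1 (var 0)
      simpa [comp, lift, hY2, hW] using this
    have h3 : BetaEtaEq (lam (app (app B X1) (app (app B Y1) (var 0))))
        (lam (app (app B X1) W)) := beq_lam (beq_appR _ h2)
    refine beq_trans h3 ?_
    have h4 : BetaEtaEq (app (app B X1) W) (lam (app X2 (app (lift 0 W) (var 0)))) := by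
      have := comp_red X1 W
      simpa [comp, hX2] using this
    refine beq_trans (beq_lam h4) ?_
    have e3 : lift 0 W = lam (app (lift 0 Y2) (app (var 2) (var 0))) := by
      simp [hW, lift, hY1, hY2, lift_lift0]
    rw [e3]
    refine beq_lam (beq_lam (beq_appR _ ?_))
    have h5 := Step.beta (app (lift 0 Y2) (app (var 2) (var 0))) (var 0)
    have e4 : subst 0 (var 0) (app (lift 0 Y2) (app (var 2) (var 0))) =
        app Y2 (app (var 1) (var 0)) := by
      simp [subst, subst_lift]
    rw [e4] at h5
    exact beq_step h5
  exact beq_trans hL (beq_symm hR)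

lemma comp_assoc (a b c : Lam) :
    BetaEtaEq (comp (comp a b) c) (comp a (comp b c)) := by
  set a1 := lift 0 a; set b1 := lift 0 b; set c1 := lift 0 c
  have hL : BetaEtaEq (comp (comp a b) c)
      (lam (app a1 (app b1 (app c1 (var 0))))) := by
    have h1 := comp_red (comp a b) c
    have e : lift 0 (comp a b) = comp a1 b1 := by simp only [comp, lift_app, lift_B]; rfl
    rw [e] at h1
    exact beq_trans h1 (beq_lam (comp_apply a1 b1 _))
  have hR : BetaEtaEq (comp a (comp b c))
      (lam (app a1 (app b1 (app c1 (var 0))))) := by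
    have h1 := comp_red a (comp b c)
    have e : lift 0 (comp b c) = comp b1 c1 := by simp only [comp, lift_app, lift_B]; rfl
    rw [e] at h1
    exact beq_trans h1 (beq_lam (beq_appR _ (comp_apply b1 c1 _)))
  exact beq_trans hL (beq_symm hR)

lemma my_ext {X Y : Lam} (hX : lift 0 X = X) (hY : lift 0 Y = Y)
    (h : BetaEtaEq (app X (var 0)) (app Y (var 0))) : BetaEtaEq X Y := by
  have h1 : BetaEtaEq (lam (app (lift 0 X) (var 0))) X := beq_step (Step.eta X)
  have h2 : BetaEtaEq (lam (app (lift 0 Y) (var 0))) Y := beq_step (Step.eta Y)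
  rw [hX] at h1; rw [hY] at h2
  exact beq_trans (beq_symm h1) (beq_trans (beq_lam h) h2)

lemma lift_bpow (c k : ℕ) : lift c (bpow k B) = bpow k B := by
  induction k with
  | zero => simp [bpow, lift_B]
  | succ k ih => simp only [bpow, lift_app, lift_B, ih]

lemma bpow_add (a b : ℕ) (e : Lam) : bpow (a + b) e = bpow a (bpow b e) := by
  induction a with
  | zero => simp [bpow]
  | succ a ih => rw [Nat.succ_add]; simp [bpow, ih]

lemma beq_bpow (k : ℕ) {a b : Lam} (h : BetaEtaEq a b) :
    BetaEtaEq (bpow k a) (bpow k b) := by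
  induction k with
  | zero => exact h
  | succ k ih => exact beq_appR B ih

lemma swapB (j : ℕ) :
    BetaEtaEq (comp B (bpow (j+1) B)) (comp (bpow (j+2) B) B) := by
  refine my_ext ?_ ?_ ?_
  · simp only [comp, lift_app, lift_B, lift_bpow]
  · simp only [comp, lift_app, lift_B, lift_bpow]
  · have hL : BetaEtaEq (app (comp B (bpow (j+1) B)) (var 0))
        (comp (bpow (j+1) B) (app B (var 0))) := by
      refine beq_trans (comp_apply _ _ _) ?_
      have e : app (bpow (j+1) B) (var 0) = comp (bpow j B) (var 0) := rfl
      rw [e]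
      exact beq_B_comp (bpow j B) (var 0)
    have hR : BetaEtaEq (app (comp (bpow (j+2) B) B) (var 0))
        (comp (bpow (j+1) B) (app B (var 0))) := comp_apply _ _ _
    exact beq_trans hL (beq_symm hR)

lemma distr (m : ℕ) (X Y : Lam) :
    BetaEtaEq (comp (bpow m X) (bpow m Y)) (bpow m (comp X Y)) := by
  induction m with
  | zero => exact beq_refl _
  | succ m ih =>
      exact beq_trans (beq_symm (beq_B_comp (bpow m X) (bpow m Y))) (beq_appR B ih)

lemma swap_lemma {m n : ℕ} (h : m < n) :
    BetaEtaEq (comp (bpow m B) (bpow n B)) (comp (bpow (n+1) B) (bpow m B)) := by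
  obtain ⟨j, rfl⟩ : ∃ j, n = m + (j + 1) := ⟨n - m - 1, by omega⟩
  have e1 : bpow (m + (j+1)) B = bpow m (bpow (j+1) B) := bpow_add _ _ _
  have e2 : bpow (m + (j+1) + 1) B = bpow m (bpow (j+2) B) := by
    rw [show m + (j+1) + 1 = m + (j+2) by ring]; exact bpow_add _ _ _
  rw [e1, e2]
  refine beq_trans (distr m B (bpow (j+1) B)) ?_
  refine beq_trans (beq_bpow m (swapB j)) ?_
  exact beq_symm (distr m (bpow (j+2) B) B)

end Lemmas3
section Lists
open Lam

/-- Insert a degree into a decreasing list using the swap rule. -/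
def ins (n : ℕ) : List ℕ → List ℕ
  | [] => [n]
  | m :: ms => if m ≤ n then n :: m :: ms else (m+1) :: ins n ms

lemma ins_ne (n : ℕ) (ms : List ℕ) : ins n ms ≠ [] := by
  cases ms with
  | nil => simp [ins]
  | cons m ms => by_cases h : m ≤ n <;> simp [ins, h]

lemma ins_length (n : ℕ) (ms : List ℕ) : (ins n ms).length = ms.length + 1 := by
  induction ms with
  | nil => rfl
  | cons m ms ih => by_cases h : m ≤ n <;> simp [ins, h, ih]

lemma ins_head (n : ℕ) (ms : List ℕ) :
    (ins n ms).head (ins_ne n ms) = n ∨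
      ∃ m, ms.head? = some m ∧ (ins n ms).head (ins_ne n ms) = m + 1 := by
  cases ms with
  | nil => left; rfl
  | cons m ms =>
      by_cases h : m ≤ n
      · left; simp [ins, h]
      · right; exact ⟨m, rfl, by simp [ins, h]⟩

lemma ins_chain (n : ℕ) (ms : List ℕ) (h : List.Chain' (· ≥ ·) ms) :
    List.Chain' (· ≥ ·) (ins n ms) := by
  induction ms with
  | nil => simp [ins, List.Chain', List.isChain_singleton]
  | cons m ms ih =>
      by_cases hm : m ≤ n
      · rw [ins, if_pos hm, List.Chain', List.isChain_cons_cons]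
        exact ⟨hm, h⟩
      · have htail : List.Chain' (· ≥ ·) ms := h.tail
        have hins := ih htail
        have hhead : (ins n ms).head (ins_ne n ms) ≤ m + 1 := by
          rcases ins_head n ms with h1 | ⟨m', hm', h1⟩
          · omega
          · rw [h1]
            have : m' ≤ m := by
              cases ms with
              | nil => simp at hm'
              | cons x xs =>
                  simp at hm'
                  subst hm'
                  exact (List.isChain_cons_cons.mp h).1
            omega
        rw [ins, if_neg hm]
        rw [List.Chain', List.isChain_cons]
        refine ⟨?_, hins⟩
        intro y hy
        have he : (ins n ms).head? = some ((ins n ms).head (ins_ne n ms)) :=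
          List.head?_eq_head _
        rw [he] at hy
        injection hy with hy
        subst hy
        exact hhead

lemma ins_minimum (n : ℕ) (ms : List ℕ) :
    (ins n ms).minimum = (n :: ms).minimum := by
  induction ms with
  | nil => rfl
  | cons m ms ih =>
      by_cases hm : m ≤ n
      · rw [ins, if_pos hm]
      · rw [ins, if_neg hm, List.minimum_cons, ih, List.minimum_cons,
          List.minimum_cons, List.minimum_cons]
        apply le_antisymm
        · apply le_min
          · exact le_trans (min_le_right _ _) (min_le_left _ _)
          · apply le_min
            · refine le_trans (le_trans (min_le_right _ _) (min_le_left _ _)) ?_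
              exact WithTop.coe_le_coe.mpr (by omega)
            · exact le_trans (min_le_right _ _) (min_le_right _ _)
        · apply le_min
          · refine le_trans (min_le_left _ _) ?_
            exact WithTop.coe_le_coe.mpr (by omega)
          · apply le_min
            · exact min_le_left _ _
            · exact le_trans (min_le_right _ _) (min_le_right _ _)

lemma poly_cons (n : ℕ) {ms : List ℕ} (h : ms ≠ []) :
    poly (n :: ms) = comp (bpow n B) (poly ms) := by
  cases ms with
  | nil => exact absurd rfl h
  | cons m ms => rfl

lemma poly_ins (n : ℕ) (ms : List ℕ) :
    BetaEtaEq (poly (n :: ms)) (poly (ins n ms)) := by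
  induction ms with
  | nil => exact beq_refl _
  | cons m ms ih =>
      by_cases hm : m ≤ n
      · rw [ins, if_pos hm]; exact beq_refl _
      · rw [ins, if_neg hm]
        have hnm : n < m := by omega
        cases ms with
        | nil =>
            show BetaEtaEq (comp (bpow n B) (bpow m B)) (poly [m+1, n])
            exact swap_lemma hnm
        | cons x xs =>
            set P := poly (x :: xs) with hP
            have e1 : poly (n :: m :: x :: xs) = comp (bpow n B) (comp (bpow m B) P) := rfl
            have e2 : poly ((m+1) :: ins n (x :: xs)) =
                comp (bpow (m+1) B) (poly (ins n (x :: xs))) :=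
              poly_cons _ (ins_ne _ _)
            rw [e1, e2]
            refine beq_trans (beq_symm (comp_assoc (bpow n B) (bpow m B) P)) ?_
            refine beq_trans (beq_appL P (beq_appR _ (swap_lemma hnm))) ?_
            refine beq_trans (comp_assoc (bpow (m+1) B) (bpow n B) P) ?_
            exact beq_appR _ ih

end Lists
/-- Every polynomial is βη-equivalent to a decreasing polynomial of the same
length and with the same minimum degree. -/
theorem stmt18 (ns : List ℕ) (hne : ns ≠ []) :
    ∃ ms : List ℕ, ms ≠ [] ∧ ms.length = ns.length ∧
      List.Chain' (· ≥ ·) ms ∧ ms.minimum = ns.minimum ∧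
      BetaEtaEq (poly ns) (poly ms) := by
  induction ns with
  | nil => exact absurd rfl hne
  | cons n ns ih =>
      cases ns with
      | nil =>
          exact ⟨[n], by simp, rfl, List.isChain_singleton n, rfl, beq_refl _⟩
      | cons x xs =>
          obtain ⟨ms', hne', hlen', hchain', hmin', hbeq'⟩ := ih (by simp)
          refine ⟨ins n ms', ins_ne n ms', ?_, ins_chain n ms' hchain', ?_, ?_⟩
          · rw [ins_length, hlen']; rfl
          · rw [ins_minimum, List.minimum_cons, List.minimum_cons, hmin']
          · have h1 : poly (n :: x :: xs) = comp (bpow n B) (poly (x :: xs)) := rfl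
            have h2 : poly (n :: ms') = comp (bpow n B) (poly ms') := poly_cons n hne'
            refine beq_trans ?_ (poly_ins n ms')
            rw [h1, h2]
            exact beq_appR _ hbeq'
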